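/- For m = 3: the depth of every word w = s_1⋯s_n of Hanoi automaton states satisfies d(w) ≤ ⌈log₂ n⌉ + 1; that is, for every input word v there exists a word u of length at most ⌈log₂ n⌉ + 1 with w|_v = w|_u. -/

import Mathlib

/-- States of the Hanoi automaton: the identity state `e` and a state `a i j`
for each transposition `(i j)`. -/
inductive HState where
  | e : HState
  | a : ℕ → ℕ → HState
deriving DecidableEq

/-- Output function: `a i j` swaps the letters `i` and `j`. -/
def HState.out : HState → ℕ → ℕ
  | .e, x => x
  | .a i j, x => if x = i then j else if x = j then i else x

/-- Transition (section) function: `a i j` goes to `e` on letters `i`, `j`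
and stays put otherwise. -/
def HState.sec : HState → ℕ → HState
  | .e, _ => .e
  | .a i j, x => if x = i ∨ x = j then .e else .a i j

/-- Action of a word of states on a letter: `(s₁⋯sₙ)(x) = s₁(s₂(⋯sₙ(x)))`. -/
def wordOut : List HState → ℕ → ℕ
  | [], x => x
  | s :: w, x => s.out (wordOut w x)

/-- Section of a word of states at a letter: `s'ᵢ = sᵢ|_{(sᵢ₊₁⋯sₙ)(x)}`. -/
def wordSec : List HState → ℕ → List HState
  | [], _ => []
  | s :: w, x => s.sec (wordOut w x) :: wordSec w x

/-- Action of a word of states on a word of letters. -/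
def wordAct : List HState → List ℕ → List ℕ
  | _, [] => []
  | w, x :: v => wordOut w x :: wordAct (wordSec w x) v

/-- Section of a word of states at a word of letters. -/
def wordSecW : List HState → List ℕ → List HState
  | w, [] => w
  | w, x :: v => wordSecW (wordSec w x) v

/-- A state of the Hanoi automaton `H_m`: either `e` or `a i j` with
`1 ≤ i < j ≤ m` (one state per transposition of `{1,…,m}`). -/
def IsHanoiState (m : ℕ) (s : HState) : Prop :=
  s = HState.e ∨ ∃ i j, s = HState.a i j ∧ 1 ≤ i ∧ i < j ∧ j ≤ m

/-! ### Auxiliary development -/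


def fixp : HState → ℕ
  | .e => 0
  | .a i j => 6 - i - j

def blocks : List HState → List HState
  | [] => []
  | s :: w =>
    if s = HState.e then blocks w
    else if (blocks w).head? = some s then blocks w
    else s :: blocks w

lemma blocks_cons_e (w : List HState) : blocks (HState.e :: w) = blocks w := by
  simp [blocks]

lemma blocks_cons_merge {s : HState} (h : s ≠ HState.e) {w : List HState}
    (hh : (blocks w).head? = some s) : blocks (s :: w) = blocks w := by
  simp [blocks, h, hh]

lemma blocks_cons_new {s : HState} (h : s ≠ HState.e) {w : List HState}
    (hh : (blocks w).head? ≠ some s) : blocks (s :: w) = s :: blocks w := by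
  simp [blocks, h, hh]

lemma hstate_cases {s : HState} (hs : IsHanoiState 3 s) :
    s = HState.e ∨ s = HState.a 1 2 ∨ s = HState.a 1 3 ∨ s = HState.a 2 3 := by
  rcases hs with rfl | ⟨i, j, rfl, h1, h2, h3⟩
  · exact Or.inl rfl
  · right
    have hi : i ≤ 2 := by omega
    interval_cases i <;> interval_cases j <;> simp

lemma out_mem {s : HState} (hs : IsHanoiState 3 s) {y : ℕ} (hy : y ∈ Finset.Icc 1 3) :
    HState.out s y ∈ Finset.Icc 1 3 := by
  rw [Finset.mem_Icc] at hy ⊢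
  obtain ⟨h1, h2⟩ := hy
  rcases hstate_cases hs with rfl | rfl | rfl | rfl <;> interval_cases y <;> decide

lemma surv_facts {s : HState} (hs : IsHanoiState 3 s) (hne : s ≠ HState.e) {y : ℕ}
    (hy : y ∈ Finset.Icc 1 3) (h : y = fixp s) :
    HState.sec s y = s ∧ HState.out s y = y := by
  rw [Finset.mem_Icc] at hy
  obtain ⟨h1, h2⟩ := hy
  rcases hstate_cases hs with rfl | rfl | rfl | rfl <;> interval_cases y <;> revert h <;> decide

lemma die_facts {s : HState} (hs : IsHanoiState 3 s) (hne : s ≠ HState.e) {y : ℕ}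
    (hy : y ∈ Finset.Icc 1 3) (h : y ≠ fixp s) :
    HState.sec s y = HState.e ∧ HState.out s y ≠ fixp s := by
  rw [Finset.mem_Icc] at hy
  obtain ⟨h1, h2⟩ := hy
  rcases hstate_cases hs with rfl | rfl | rfl | rfl <;> interval_cases y <;> revert h <;> decide

lemma fixp_inj {s t : HState} (hs : IsHanoiState 3 s) (hnes : s ≠ HState.e)
    (ht : IsHanoiState 3 t) (hnet : t ≠ HState.e) (h : fixp s = fixp t) : s = t := by
  rcases hstate_cases hs with rfl | rfl | rfl | rfl <;>
    rcases hstate_cases ht with rfl | rfl | rfl | rfl <;> revert h <;> decide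

lemma blocks_spec : ∀ (w : List HState), ∀ b ∈ blocks w, b ∈ w ∧ b ≠ HState.e := by
  intro w
  induction w with
  | nil => simp [blocks]
  | cons s t ih =>
    intro b hb
    by_cases hse : s = HState.e
    · subst hse
      rw [blocks_cons_e] at hb
      exact ⟨List.mem_cons_of_mem _ (ih b hb).1, (ih b hb).2⟩
    · by_cases hh : (blocks t).head? = some s
      · rw [blocks_cons_merge hse hh] at hb
        exact ⟨List.mem_cons_of_mem _ (ih b hb).1, (ih b hb).2⟩
      · rw [blocks_cons_new hse hh] at hb
        rcases List.mem_cons.mp hb with rfl | hb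
        · exact ⟨List.mem_cons_self, hse⟩
        · exact ⟨List.mem_cons_of_mem _ (ih b hb).1, (ih b hb).2⟩

lemma blocks_length_le : ∀ (w : List HState), (blocks w).length ≤ w.length := by
  intro w
  induction w with
  | nil => simp [blocks]
  | cons s t ih =>
    by_cases hse : s = HState.e
    · subst hse; rw [blocks_cons_e]; simpa using Nat.le_succ_of_le ih
    · by_cases hh : (blocks t).head? = some s
      · rw [blocks_cons_merge hse hh]; simpa using Nat.le_succ_of_le ih
      · rw [blocks_cons_new hse hh]; simpa using ih

lemma sec_eq_or (s : HState) (y : ℕ) : HState.sec s y = s ∨ HState.sec s y = HState.e := by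
  cases s with
  | e => exact Or.inl rfl
  | a i j =>
    by_cases h : y = i ∨ y = j
    · exact Or.inr (by simp [HState.sec, h])
    · exact Or.inl (by simp [HState.sec, h])

lemma wordSec_hanoi : ∀ {w : List HState}, (∀ s ∈ w, IsHanoiState 3 s) →
    ∀ (x : ℕ), ∀ s ∈ wordSec w x, IsHanoiState 3 s := by
  intro w
  induction w with
  | nil => intro _ x s hs; simp [wordSec] at hs
  | cons a t ih =>
    intro hw x s hs
    rw [show wordSec (a :: t) x = a.sec (wordOut t x) :: wordSec t x from rfl] at hs
    rcases List.mem_cons.mp hs with rfl | hs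
    · rcases sec_eq_or a (wordOut t x) with h | h <;> rw [h]
      · exact hw a (List.mem_cons_self)
      · exact Or.inl rfl
    · exact ih (fun s hs => hw s (List.mem_cons_of_mem _ hs)) x s hs

/-- The main invariant carried through a single-letter section. -/
def SecInv (w : List HState) (x : ℕ) : Prop :=
  wordOut w x ∈ Finset.Icc 1 3 ∧
  ((wordSec w x = w ∧ blocks (wordSec w x) = blocks w ∧
      (blocks w).length ≤ 1 ∧
      (blocks w = [] → wordOut w x = x) ∧
      (∀ b, (blocks w).head? = some b → wordOut w x = fixp b))
   ∨ (wordSec w x ≠ w ∧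
      ((∃ b, (blocks w).head? = some b ∧
          (blocks (wordSec w x)).head? = some b ∧
          wordOut w x = fixp b ∧ 2 ≤ (blocks w).length ∧
          2 * (blocks (wordSec w x)).length ≤ (blocks w).length + 1)
       ∨ ((∀ b, (blocks w).head? = some b → wordOut w x ≠ fixp b) ∧
          1 ≤ (blocks w).length ∧
          2 * (blocks (wordSec w x)).length ≤ (blocks w).length))))

lemma inv_main : ∀ (w : List HState), (∀ s ∈ w, IsHanoiState 3 s) →
    ∀ {x : ℕ}, x ∈ Finset.Icc 1 3 → SecInv w x := by
  intro w
  induction w with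
  | nil =>
    intro _ x hx
    refine ⟨by simpa [wordOut] using hx, Or.inl ?_⟩
    simp [wordSec, blocks, wordOut]
  | cons s t ih =>
    intro hw x hx
    have hs : IsHanoiState 3 s := hw s (List.mem_cons_self)
    have ht : ∀ a ∈ t, IsHanoiState 3 a := fun a ha => hw a (List.mem_cons_of_mem _ ha)
    obtain ⟨hy, hcase⟩ := ih ht hx
    have keyS : wordSec (s :: t) x = HState.sec s (wordOut t x) :: wordSec t x := rfl
    have keyO : wordOut (s :: t) x = HState.out s (wordOut t x) := rfl
    by_cases hse : s = HState.e
    · subst hse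
      refine ⟨by simpa [keyO, HState.out] using hy, ?_⟩
      rw [keyS, keyO]
      simp only [HState.sec, HState.out]
      rw [blocks_cons_e, blocks_cons_e]
      rcases hcase with ⟨h1, h2, h3, h4, h5⟩ | ⟨h1, h2⟩
      · exact Or.inl ⟨by rw [h1], h2, h3, h4, h5⟩
      · exact Or.inr ⟨by simpa using h1, h2⟩
    · by_cases hyf : wordOut t x = fixp s
      · -- s survives
        obtain ⟨hsec, hout⟩ := surv_facts hs hse hy hyf
        refine ⟨by rw [keyO, hout]; exact hy, ?_⟩
        rw [keyS, keyO, hsec, hout]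
        rcases hcase with ⟨h1, h2, h3, h4, h5⟩ | ⟨h1, hk⟩
        · -- no kill in t
          rcases hB : (blocks t).head? with _ | b
          · -- blocks t = []
            have hBnil : blocks t = [] := List.head?_eq_none_iff.mp hB
            have hnew : blocks (s :: t) = s :: blocks t :=
              blocks_cons_new hse (by rw [hB]; simp)
            refine Or.inl ⟨by rw [h1], by rw [h1], ?_, ?_, ?_⟩
            · rw [hnew, hBnil]; simp
            · intro hc; rw [hnew] at hc; simp at hc
            · intro b hb
              rw [hnew] at hb
              simp only [List.head?_cons, Option.some.injEq] at hb
              rw [← hb, hyf]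
          · -- head block of t exists and survived fully
            have hbmem := blocks_spec t b (List.mem_of_mem_head? hB)
            have hbs : b = s := fixp_inj (ht b hbmem.1) hbmem.2 hs hse
              (by rw [← h5 b hB, hyf])
            rw [hbs] at hB
            have hmerge : blocks (s :: t) = blocks t := blocks_cons_merge hse hB
            refine Or.inl ⟨by rw [h1], by rw [h1], ?_, ?_, ?_⟩
            · rw [hmerge]; exact h3
            · intro hc; rw [hmerge] at hc; rw [hc] at hB; simp at hB
            · intro b' hb'
              rw [hmerge] at hb'
              exact h5 b' hb'
        · rcases hk with ⟨b, hb1, hb2, hb3, hb4, hb5⟩ | ⟨hd, hl, hi⟩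
          · -- kill, head survived
            have hbmem := blocks_spec t b (List.mem_of_mem_head? hb1)
            have hbs : b = s := fixp_inj (ht b hbmem.1) hbmem.2 hs hse (by rw [← hb3, hyf])
            rw [hbs] at hb1 hb2
            have hmt : blocks (s :: t) = blocks t := blocks_cons_merge hse hb1
            have hmw : blocks (s :: wordSec t x) = blocks (wordSec t x) :=
              blocks_cons_merge hse hb2
            refine Or.inr ⟨by simp [h1], Or.inl ⟨s, ?_, ?_, hyf, ?_, ?_⟩⟩
            · rw [hmt]; exact hb1
            · rw [hmw]; exact hb2
            · rw [hmt]; exact hb4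
            · rw [hmt, hmw]; exact hb5
          · -- kill, head died; s starts a new surviving block
            have hnt : blocks (s :: t) = s :: blocks t := by
              apply blocks_cons_new hse
              intro hc
              exact hd s hc hyf
            refine Or.inr ⟨by simp [h1], Or.inl ⟨s, ?_, ?_, hyf, ?_, ?_⟩⟩
            · rw [hnt]; simp
            · by_cases hh : (blocks (wordSec t x)).head? = some s
              · rw [blocks_cons_merge hse hh]; exact hh
              · rw [blocks_cons_new hse hh]; simp
            · rw [hnt]; simp only [List.length_cons]; omega
            · by_cases hh : (blocks (wordSec t x)).head? = some s
              · rw [blocks_cons_merge hse hh, hnt]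
                simp only [List.length_cons]; omega
              · rw [blocks_cons_new hse hh, hnt]
                simp only [List.length_cons]; omega
      · -- s dies
        obtain ⟨hsec, houtne⟩ := die_facts hs hse hy hyf
        refine ⟨by rw [keyO]; exact out_mem hs hy, ?_⟩
        rw [keyS, keyO, hsec]
        rw [blocks_cons_e]
        rcases hcase with ⟨h1, h2, h3, h4, h5⟩ | ⟨h1, hk⟩
        · -- t had no kill; s is first kill
          have hnt : blocks (s :: t) = s :: blocks t := by
            apply blocks_cons_new hse
            intro hc
            exact hyf (h5 s hc)
          refine Or.inr ⟨?_, Or.inr ⟨?_, ?_, ?_⟩⟩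
          · rw [h1]; intro hc
            exact hse (List.head_eq_of_cons_eq hc).symm
          · intro b hb
            rw [hnt] at hb
            simp only [List.head?_cons, Option.some.injEq] at hb
            rw [← hb]; exact houtne
          · rw [hnt]; simp
          · rw [hnt, h1]
            simp only [List.length_cons]; omega
        · rcases hk with ⟨b, hb1, hb2, hb3, hb4, hb5⟩ | ⟨hd, hl, hi⟩
          · -- head of t survived, s dies
            have hbne : b ≠ s := by
              intro hc; subst hc; exact hyf hb3
            have hnt : blocks (s :: t) = s :: blocks t := by
              apply blocks_cons_new hse
              intro hc; rw [hb1] at hc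
              exact hbne (by injection hc)
            refine Or.inr ⟨?_, Or.inr ⟨?_, ?_, ?_⟩⟩
            · intro hc; exact hse (List.head_eq_of_cons_eq hc).symm
            · intro b' hb'
              rw [hnt] at hb'
              simp only [List.head?_cons, Option.some.injEq] at hb'
              rw [← hb']; exact houtne
            · rw [hnt]; simp
            · rw [hnt]; simp only [List.length_cons]; omega
          · -- head of t died, s dies
            by_cases hh : (blocks t).head? = some s
            · have hmt : blocks (s :: t) = blocks t := blocks_cons_merge hse hh
              refine Or.inr ⟨?_, Or.inr ⟨?_, ?_, ?_⟩⟩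
              · intro hc; exact hse (List.head_eq_of_cons_eq hc).symm
              · intro b' hb'
                rw [hmt, hh] at hb'
                rw [show b' = s from by injection hb'.symm]
                exact houtne
              · rw [hmt]; exact hl
              · rw [hmt]; exact hi
            · have hnt : blocks (s :: t) = s :: blocks t := blocks_cons_new hse hh
              refine Or.inr ⟨?_, Or.inr ⟨?_, ?_, ?_⟩⟩
              · intro hc; exact hse (List.head_eq_of_cons_eq hc).symm
              · intro b' hb'
                rw [hnt] at hb'
                simp only [List.head?_cons, Option.some.injEq] at hb'
                rw [← hb']; exact houtne
              · rw [hnt]; simp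
              · rw [hnt]; simp only [List.length_cons]; omega

lemma step_lemma {w : List HState} (hw : ∀ s ∈ w, IsHanoiState 3 s) {x : ℕ}
    (hx : x ∈ Finset.Icc 1 3) :
    wordSec w x = w ∨
      (2 * (blocks (wordSec w x)).length ≤ (blocks w).length + 1 ∧
        (blocks (wordSec w x)).length < (blocks w).length) := by
  obtain ⟨-, h⟩ := inv_main w hw hx
  rcases h with ⟨h1, -⟩ | ⟨-, ⟨b, -, -, -, hb4, hb5⟩ | ⟨-, hl, hi⟩⟩
  · exact Or.inl h1
  · exact Or.inr ⟨hb5, by omega⟩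
  · exact Or.inr ⟨by omega, by omega⟩

/-- Depth bound as a function of the number of blocks. -/
def gbound (r : ℕ) : ℕ := if r = 0 then 0 else Nat.clog 2 r + 1

lemma gbound_rec {r r' : ℕ} (h1 : 2 * r' ≤ r + 1) (h2 : r' < r) :
    gbound r' + 1 ≤ gbound r := by
  have hr : 1 ≤ r := by omega
  rcases Nat.eq_zero_or_pos r' with rfl | hr'
  · have e0 : gbound 0 = 0 := by simp [gbound]
    have e1 : gbound r = Nat.clog 2 r + 1 := by
      unfold gbound; rw [if_neg (show ¬ r = 0 by omega)]
    omega
  · have hr2 : 2 ≤ r := by omega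
    have hclog : Nat.clog 2 r = Nat.clog 2 ((r + 1) / 2) + 1 := by
      have h := Nat.clog_of_two_le (b := 2) (n := r) (by norm_num) hr2
      rw [h, show r + 2 - 1 = r + 1 by omega]
    have hle : r' ≤ (r + 1) / 2 := by omega
    have : Nat.clog 2 r' ≤ Nat.clog 2 ((r + 1) / 2) := Nat.clog_mono_right _ hle
    unfold gbound
    rw [if_neg (show ¬ r' = 0 by omega), if_neg (show ¬ r = 0 by omega)]
    omega

lemma gbound_mono {r r' : ℕ} (h : r ≤ r') : gbound r ≤ gbound r' := by
  rcases Nat.eq_zero_or_pos r with rfl | hr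
  · simp [gbound]
  · have h1 : r ≠ 0 := by omega
    have h2 : r' ≠ 0 := by omega
    unfold gbound
    rw [if_neg h1, if_neg h2]
    exact Nat.add_le_add_right (Nat.clog_mono_right _ h) 1

lemma main_rec : ∀ (v : List ℕ), (∀ y ∈ v, y ∈ Finset.Icc 1 3) →
    ∀ (w : List HState), (∀ s ∈ w, IsHanoiState 3 s) →
    ∃ u : List ℕ, (∀ y ∈ u, y ∈ Finset.Icc 1 3) ∧
      u.length ≤ gbound (blocks w).length ∧ wordSecW w v = wordSecW w u := by
  intro v
  induction v with
  | nil => exact fun _ w _ => ⟨[], by simp, by simp, rfl⟩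
  | cons x v ih =>
    intro hv w hw
    have hx : x ∈ Finset.Icc 1 3 := hv x (List.mem_cons_self)
    have hv' : ∀ y ∈ v, y ∈ Finset.Icc 1 3 := fun y hy => hv y (List.mem_cons_of_mem _ hy)
    rcases step_lemma hw hx with h | ⟨h1, h2⟩
    · obtain ⟨u, hu1, hu2, hu3⟩ := ih hv' w hw
      refine ⟨u, hu1, hu2, ?_⟩
      rw [show wordSecW w (x :: v) = wordSecW (wordSec w x) v from rfl, h, hu3]
    · obtain ⟨u, hu1, hu2, hu3⟩ := ih hv' (wordSec w x) (wordSec_hanoi hw x)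
      refine ⟨x :: u, ?_, ?_, ?_⟩
      · intro y hy
        rcases List.mem_cons.mp hy with rfl | hy
        · exact hx
        · exact hu1 y hy
      · simp only [List.length_cons]
        calc u.length + 1 ≤ gbound (blocks (wordSec w x)).length + 1 := by omega
          _ ≤ gbound (blocks w).length := gbound_rec h1 h2
      · rw [show wordSecW w (x :: v) = wordSecW (wordSec w x) v from rfl, hu3]; rfl

/-- For `m = 3`: every word of `n` Hanoi states has depth at most `⌈log₂ n⌉ + 1`:
every section equals a section at a word of length at most `⌈log₂ n⌉ + 1`. -/
theorem hanoi3_depth (n : ℕ) (hn : 1 ≤ n) (w : List HState) (hlen : w.length = n)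
    (hw : ∀ s ∈ w, IsHanoiState 3 s)
    (v : List ℕ) (hv : ∀ y ∈ v, y ∈ Finset.Icc 1 3) :
    ∃ u : List ℕ, (∀ y ∈ u, y ∈ Finset.Icc 1 3) ∧
      u.length ≤ Nat.clog 2 n + 1 ∧ wordSecW w v = wordSecW w u := by
  obtain ⟨u, hu1, hu2, hu3⟩ := main_rec v hv w hw
  refine ⟨u, hu1, ?_, hu3⟩
  refine hu2.trans ?_
  have hle : (blocks w).length ≤ n := hlen ▸ blocks_length_le w
  refine (gbound_mono hle).trans ?_
  unfold gbound
  rw [if_neg (show ¬ n = 0 by omega)]
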